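/- For every finite weighted tree T, the Banach–Mazur distance between the space TP(T) endowed with the double-point norm ‖·‖_DP (assuming it is a norm on TP(T)) and ℓ_∞^{|E(T)|} is at most 4; i.e., there is a linear bijection D: TP(T) → ℝ^{E(T)} with (1/4)‖f‖_DP ≤ ‖Df‖_∞ ≤ ‖f‖_DP. -/

import Mathlib

open Classical

/-- Edges on the path from `v` to the root `0` of the rooted tree on `Fin (n+1)` given by
the parent map `p`; a non-root vertex `z` indexes the edge `{p z, z}`. -/
noncomputable def chainToRoot {n : ℕ} (p : Fin (n + 1) → Fin (n + 1))
    (v : Fin (n + 1)) : Finset (Fin (n + 1)) :=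
  Finset.univ.filter fun z => z ≠ 0 ∧ ∃ k, p^[k] v = z

/-- The weighted tree (geodesic) distance on the rooted tree. -/
noncomputable def treeDist {n : ℕ} (p : Fin (n + 1) → Fin (n + 1))
    (wt : Fin (n + 1) → ℝ) (u v : Fin (n + 1)) : ℝ :=
  ∑ z ∈ (chainToRoot p u \ chainToRoot p v) ∪ (chainToRoot p v \ chainToRoot p u), wt z

/-- The double-point seminorm of `f ∈ TP(T)` for the tree metric. -/
noncomputable def dpNorm {n : ℕ} (p : Fin (n + 1) → Fin (n + 1))
    (wt : Fin (n + 1) → ℝ) (f : Fin (n + 1) → ℝ) : ℝ :=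
  sSup {r : ℝ | ∃ u v : Fin (n + 1),
    r = |∑ m, ((treeDist p wt v m - treeDist p wt u m) / 2) * f m|}

/-- The subspace `TP(T)` of zero-sum functions on the vertices. -/
noncomputable def TPtree (n : ℕ) : Submodule ℝ (Fin (n + 1) → ℝ) :=
  LinearMap.ker (∑ i, (LinearMap.proj i : (Fin (n + 1) → ℝ) →ₗ[ℝ] ℝ))

namespace Stmt14Aux

open Finset

variable {n : ℕ}

/-- vertices m whose chain passes through v (the subtree below v, incl. v). -/
noncomputable def Aset (p : Fin (n + 1) → Fin (n + 1)) (v : Fin (n + 1)) :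
    Finset (Fin (n + 1)) :=
  Finset.univ.filter fun m => ∃ k, p^[k] m = v

noncomputable def Sval (p : Fin (n + 1) → Fin (n + 1)) (f : Fin (n + 1) → ℝ)
    (v : Fin (n + 1)) : ℝ :=
  ∑ m ∈ Aset p v, f m

noncomputable def Gval (p : Fin (n + 1) → Fin (n + 1)) (wt f : Fin (n + 1) → ℝ)
    (v : Fin (n + 1)) : ℝ :=
  ∑ z ∈ chainToRoot p v, wt z * Sval p f z

variable {p : Fin (n + 1) → Fin (n + 1)}

lemma p_le (hp0 : p 0 = 0) (hp : ∀ v, v ≠ 0 → p v < v) (v : Fin (n + 1)) : p v ≤ v := by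
  by_cases h : v = 0
  · subst h; simp [hp0]
  · exact le_of_lt (hp v h)

lemma iter_le (hp0 : p 0 = 0) (hp : ∀ v, v ≠ 0 → p v < v) (k : ℕ) (v : Fin (n + 1)) :
    p^[k] v ≤ v := by
  induction k with
  | zero => simp
  | succ k ih =>
    rw [Function.iterate_succ_apply']
    exact le_trans (p_le hp0 hp _) ih

lemma iter_zero (hp0 : p 0 = 0) (k : ℕ) : p^[k] (0 : Fin (n + 1)) = 0 := by
  induction k with
  | zero => rfl
  | succ k ih => rw [Function.iterate_succ_apply, hp0, ih]

lemma chain_zero (hp0 : p 0 = 0) : chainToRoot p (0 : Fin (n + 1)) = ∅ := by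
  ext y
  simp only [chainToRoot, mem_filter, mem_univ, true_and, Finset.notMem_empty, iff_false]
  rintro ⟨hy, k, hk⟩
  exact hy (by rw [iter_zero hp0] at hk; exact hk.symm)

lemma chain_succ {z : Fin (n + 1)} (hz : z ≠ 0) :
    chainToRoot p z = insert z (chainToRoot p (p z)) := by
  ext y
  simp only [chainToRoot, mem_filter, mem_univ, true_and, Finset.mem_insert]
  constructor
  · rintro ⟨hy, k, hk⟩
    cases k with
    | zero => exact Or.inl hk.symm
    | succ j =>
      exact Or.inr ⟨hy, j, by rwa [Function.iterate_succ_apply] at hk⟩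
  · rintro (rfl | ⟨hy, k, hk⟩)
    · exact ⟨hz, 0, rfl⟩
    · exact ⟨hy, k + 1, by rwa [Function.iterate_succ_apply]⟩

lemma not_mem_chain_parent (hp0 : p 0 = 0) (hp : ∀ v, v ≠ 0 → p v < v)
    {z : Fin (n + 1)} (hz : z ≠ 0) : z ∉ chainToRoot p (p z) := by
  simp only [chainToRoot, mem_filter, mem_univ, true_and, not_and]
  rintro - ⟨k, hk⟩
  have h1 : p^[k] (p z) ≤ p z := iter_le hp0 hp k (p z)
  rw [hk] at h1
  exact absurd (lt_of_le_of_lt h1 (hp z hz)) (lt_irrefl z)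

lemma Gval_succ (hp0 : p 0 = 0) (hp : ∀ v, v ≠ 0 → p v < v) (wt f : Fin (n + 1) → ℝ)
    {z : Fin (n + 1)} (hz : z ≠ 0) :
    Gval p wt f z = wt z * Sval p f z + Gval p wt f (p z) := by
  rw [Gval, chain_succ hz, Finset.sum_insert (not_mem_chain_parent hp0 hp hz)]; rfl

lemma Gval_zero (hp0 : p 0 = 0) (wt f : Fin (n + 1) → ℝ) : Gval p wt f 0 = 0 := by
  rw [Gval, chain_zero hp0, Finset.sum_empty]

lemma treeDist_eq (wt : Fin (n + 1) → ℝ) (u v : Fin (n + 1)) :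
    treeDist p wt u v = (∑ z ∈ chainToRoot p u, wt z) + (∑ z ∈ chainToRoot p v, wt z)
      - 2 * ∑ z ∈ chainToRoot p u ∩ chainToRoot p v, wt z := by
  rw [treeDist, Finset.sum_union disjoint_sdiff_sdiff]
  have h1 : ∑ z ∈ chainToRoot p u \ chainToRoot p v, wt z
      = (∑ z ∈ chainToRoot p u, wt z) - ∑ z ∈ chainToRoot p u ∩ chainToRoot p v, wt z := by
    rw [← Finset.sdiff_inter_self_left, Finset.sum_sdiff_eq_sub Finset.inter_subset_left]
  have h2 : ∑ z ∈ chainToRoot p v \ chainToRoot p u, wt z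
      = (∑ z ∈ chainToRoot p v, wt z) - ∑ z ∈ chainToRoot p u ∩ chainToRoot p v, wt z := by
    rw [← Finset.sdiff_inter_self_left, Finset.sum_sdiff_eq_sub Finset.inter_subset_left,
      Finset.inter_comm]
  rw [h1, h2]; ring

lemma inner_sum (wt f : Fin (n + 1) → ℝ) (v : Fin (n + 1)) :
    ∑ m, (∑ z ∈ chainToRoot p v ∩ chainToRoot p m, wt z) * f m = Gval p wt f v := by
  have step1 : ∀ m : Fin (n + 1), (∑ z ∈ chainToRoot p v ∩ chainToRoot p m, wt z) * f m
      = ∑ z ∈ chainToRoot p v, if z ∈ chainToRoot p m then wt z * f m else 0 := by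
    intro m
    rw [Finset.sum_mul, ← Finset.filter_mem_eq_inter, Finset.sum_filter]
  rw [Finset.sum_congr rfl (fun m _ => step1 m), Finset.sum_comm]
  refine Finset.sum_congr rfl (fun z hz => ?_)
  have hz0 : z ≠ 0 := by
    simp only [chainToRoot, mem_filter] at hz; exact hz.2.1
  rw [← Finset.sum_filter]
  have : Finset.univ.filter (fun m => z ∈ chainToRoot p m) = Aset p z := by
    ext m
    simp only [Aset, chainToRoot, mem_filter, mem_univ, true_and]
    exact ⟨fun h => h.2, fun h => ⟨hz0, h⟩⟩
  rw [this, Sval, Finset.mul_sum]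

lemma phi_eq (wt f : Fin (n + 1) → ℝ) (hf : ∑ m, f m = 0) (u v : Fin (n + 1)) :
    ∑ m, ((treeDist p wt v m - treeDist p wt u m) / 2) * f m
      = Gval p wt f u - Gval p wt f v := by
  have key : ∀ m : Fin (n + 1), ((treeDist p wt v m - treeDist p wt u m) / 2) * f m
      = (((∑ z ∈ chainToRoot p v, wt z) - ∑ z ∈ chainToRoot p u, wt z) / 2) * f m
        + ((∑ z ∈ chainToRoot p u ∩ chainToRoot p m, wt z) * f m
          - (∑ z ∈ chainToRoot p v ∩ chainToRoot p m, wt z) * f m) := by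
    intro m
    rw [treeDist_eq wt v m, treeDist_eq wt u m]; ring
  rw [Finset.sum_congr rfl (fun m _ => key m), Finset.sum_add_distrib,
    Finset.sum_sub_distrib, ← Finset.mul_sum, hf, mul_zero, zero_add,
    inner_sum wt f u, inner_sum wt f v]

lemma Aset_zero (hp0 : p 0 = 0) (hp : ∀ v, v ≠ 0 → p v < v) :
    Aset p (0 : Fin (n + 1)) = Finset.univ := by
  have haux : ∀ j : ℕ, ∀ m : Fin (n + 1), m.val ≤ j → ∃ k, p^[k] m = 0 := by
    intro j
    induction j with
    | zero =>
      intro m hm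
      have : m = 0 := Fin.ext (Nat.le_zero.mp hm)
      exact ⟨0, by simp [this]⟩
    | succ j ih =>
      intro m hm
      by_cases h : m = 0
      · exact ⟨0, by simp [h]⟩
      · obtain ⟨k, hk⟩ := ih (p m) (by
          have := hp m h
          omega)
        exact ⟨k + 1, by rwa [Function.iterate_succ_apply]⟩
  ext m
  simp only [Aset, Finset.mem_filter, Finset.mem_univ, true_and, iff_true]
  exact haux m.val m le_rfl

lemma f_eq_zero (hp0 : p 0 = 0) (hp : ∀ v, v ≠ 0 → p v < v)
    (wt : Fin (n + 1) → ℝ) (hwt : ∀ v, v ≠ 0 → 0 < wt v)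
    (f : Fin (n + 1) → ℝ) (hf : ∑ m, f m = 0)
    (hG : ∀ z : Fin (n + 1), z ≠ 0 → Gval p wt f z = 0) : f = 0 := by
  have hGall : ∀ z, Gval p wt f z = 0 := by
    intro z
    by_cases hz : z = 0
    · subst hz; exact Gval_zero hp0 wt f
    · exact hG z hz
  have hS : ∀ z : Fin (n + 1), z ≠ 0 → Sval p f z = 0 := by
    intro z hz
    have h1 := Gval_succ hp0 hp wt f hz
    rw [hGall z, hGall (p z)] at h1
    have h2 : wt z * Sval p f z = 0 := by linarith
    exact (mul_eq_zero.mp h2).resolve_left (ne_of_gt (hwt z hz))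
  have hfv : ∀ v : Fin (n + 1), v ≠ 0 → f v = 0 := by
    intro v hv
    set ch : Finset (Fin (n + 1)) := Finset.univ.filter (fun c => p c = v ∧ c ≠ v) with hch
    have hcov : Aset p v \ {v} = ch.biUnion (Aset p) := by
      ext m
      simp only [Aset, hch, Finset.mem_biUnion, Finset.mem_sdiff, Finset.mem_filter,
        Finset.mem_univ, true_and, Finset.mem_singleton]
      constructor
      · rintro ⟨⟨k, hk⟩, hm⟩
        cases k with
        | zero => exact absurd hk hm
        | succ j =>
          rw [Function.iterate_succ_apply'] at hk
          refine ⟨p^[j] m, ⟨hk, ?_⟩, j, rfl⟩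
          intro hc
          rw [hc] at hk
          exact absurd hk (ne_of_lt (hp v hv))
      · rintro ⟨c, ⟨hpc, hcv⟩, j, hj⟩
        have hc0 : c ≠ 0 := by
          intro h0; rw [h0, hp0] at hpc; exact hv hpc.symm
        refine ⟨⟨j + 1, by rw [Function.iterate_succ_apply', hj, hpc]⟩, ?_⟩
        intro hmv
        subst hmv
        have hle : c ≤ m := hj ▸ iter_le hp0 hp j m
        have : m < c := hpc ▸ hp c hc0
        exact absurd hle (not_le.mpr this)
    have hdisj : ∀ c ∈ ch, ∀ c' ∈ ch, c ≠ c' → Disjoint (Aset p c) (Aset p c') := by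
      have haux : ∀ c c' : Fin (n + 1), p c = v → c ≠ v → p c' = v → c' ≠ v →
          ∀ (m : Fin (n + 1)) (j j' : ℕ), j ≤ j' → p^[j] m = c → p^[j'] m = c' → c = c' := by
        intro c c' hpc hcv hpc' hcv' m j j' hjj' hj hj'
        have hiter : p^[j'] m = p^[j' - j] (p^[j] m) := by
          rw [← Function.iterate_add_apply, Nat.sub_add_cancel hjj']
        rw [hj, hj'] at hiter
        rcases Nat.eq_zero_or_pos (j' - j) with hd | hd
        · rw [hd] at hiter; simpa using hiter.symm
        · exfalso
          obtain ⟨d, hdd⟩ := Nat.exists_eq_succ_of_ne_zero (Nat.pos_iff_ne_zero.mp hd)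
          rw [hdd, Function.iterate_succ_apply, hpc] at hiter
          have hle : c' ≤ v := by rw [hiter]; exact iter_le hp0 hp d v
          have hc'0 : c' ≠ 0 := by
            intro h0; rw [h0, hp0] at hpc'; exact hv hpc'.symm
          have : v < c' := hpc' ▸ hp c' hc'0
          exact absurd hle (not_le.mpr this)
      intro c hc c' hc' hne
      simp only [hch, Finset.mem_filter, Finset.mem_univ, true_and] at hc hc'
      rw [Finset.disjoint_left]
      intro m hm hm'
      simp only [Aset, Finset.mem_filter, Finset.mem_univ, true_and] at hm hm'
      obtain ⟨j, hj⟩ := hm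
      obtain ⟨j', hj'⟩ := hm'
      rcases le_total j j' with h | h
      · exact hne (haux c c' hc.1 hc.2 hc'.1 hc'.2 m j j' h hj hj')
      · exact hne ((haux c' c hc'.1 hc'.2 hc.1 hc.2 m j' j h hj' hj).symm)
    have hvmem : v ∈ Aset p v := by
      simp only [Aset, Finset.mem_filter, Finset.mem_univ, true_and]
      exact ⟨0, rfl⟩
    have h1 : Sval p f v = (∑ m ∈ Aset p v \ {v}, f m) + f v := by
      rw [Sval, ← Finset.sum_eq_sum_sdiff_singleton_add hvmem]
    have h2 : ∑ m ∈ Aset p v \ {v}, f m = ∑ c ∈ ch, Sval p f c := by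
      rw [hcov, Finset.sum_biUnion hdisj]
      rfl
    have h3 : ∑ c ∈ ch, Sval p f c = 0 := by
      refine Finset.sum_eq_zero (fun c hc => ?_)
      simp only [hch, Finset.mem_filter, Finset.mem_univ, true_and] at hc
      have hc0 : c ≠ 0 := by
        intro h0; rw [h0, hp0] at hc; exact hv hc.1.symm
      exact hS c hc0
    have h4 := hS v hv
    rw [h1, h2, h3] at h4
    linarith
  funext v
  by_cases hv : v = 0
  · subst hv
    have h5 : ∑ m ∈ Finset.univ \ {(0 : Fin (n + 1))}, f m = 0 :=
      Finset.sum_eq_zero (fun m hm => hfv m (by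
        simp only [Finset.mem_sdiff, Finset.mem_singleton] at hm; exact hm.2))
    have h6 := Finset.sum_eq_sum_sdiff_singleton_add (Finset.mem_univ (0 : Fin (n + 1))) f
    rw [hf, h5, zero_add] at h6
    simpa using h6.symm
  · simpa using hfv v hv

lemma mem_TPtree (f : Fin (n + 1) → ℝ) : f ∈ TPtree n ↔ ∑ m, f m = 0 := by
  simp [TPtree, LinearMap.mem_ker, LinearMap.sum_apply, LinearMap.proj_apply]

noncomputable def Dmap (p : Fin (n + 1) → Fin (n + 1)) (wt : Fin (n + 1) → ℝ) :
    TPtree n →ₗ[ℝ] ({z : Fin (n + 1) // z ≠ 0} → ℝ) where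
  toFun f := fun z => Gval p wt (f : Fin (n + 1) → ℝ) z.val
  map_add' f g := by
    funext z
    simp only [Gval, Sval, Submodule.coe_add, Pi.add_apply, Finset.sum_add_distrib, mul_add]
  map_smul' c f := by
    funext z
    simp only [Gval, Sval, SetLike.val_smul, Pi.smul_apply, smul_eq_mul, RingHom.id_apply,
      Finset.mul_sum]
    refine Finset.sum_congr rfl fun z' _ => ?_
    simp only [← Finset.mul_sum]
    ring

lemma Dmap_inj (hp0 : p 0 = 0) (hp : ∀ v, v ≠ 0 → p v < v)
    (wt : Fin (n + 1) → ℝ) (hwt : ∀ v, v ≠ 0 → 0 < wt v) :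
    Function.Injective (Dmap p wt) := by
  rw [← LinearMap.ker_eq_bot, LinearMap.ker_eq_bot']
  intro f hfD
  have hf : ∑ m, (f : Fin (n + 1) → ℝ) m = 0 := (mem_TPtree _).mp f.2
  have hG : ∀ z : Fin (n + 1), z ≠ 0 → Gval p wt (f : Fin (n + 1) → ℝ) z = 0 := by
    intro z hz
    have := congrFun hfD ⟨z, hz⟩
    simpa [Dmap] using this
  have := f_eq_zero hp0 hp wt hwt (f : Fin (n + 1) → ℝ) hf hG
  exact Subtype.ext (by simpa using this)

lemma finrank_TPtree : Module.finrank ℝ (TPtree n) = n := by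
  have hφ : Function.Surjective
      (⇑(∑ i, (LinearMap.proj i : (Fin (n + 1) → ℝ) →ₗ[ℝ] ℝ))) := by
    intro r
    refine ⟨fun i => if i = 0 then r else 0, ?_⟩
    simp [LinearMap.sum_apply, LinearMap.proj_apply]
  have h := LinearMap.finrank_range_add_finrank_ker
    (∑ i, (LinearMap.proj i : (Fin (n + 1) → ℝ) →ₗ[ℝ] ℝ))
  rw [LinearMap.range_eq_top.mpr hφ] at h
  simp only [finrank_top, Module.finrank_self, Module.finrank_pi, Fintype.card_fin] at h
  have : Module.finrank ℝ (TPtree n) = Module.finrank ℝ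
      (LinearMap.ker (∑ i, (LinearMap.proj i : (Fin (n + 1) → ℝ) →ₗ[ℝ] ℝ))) := rfl
  omega

lemma card_ne_zero : Fintype.card {z : Fin (n + 1) // z ≠ 0} = n := by
  have h := Fintype.card_subtype_compl (fun z : Fin (n + 1) => z = 0)
  simp only [Fintype.card_subtype_eq, Fintype.card_fin] at h
  convert h using 2
  omega

lemma finrank_target : Module.finrank ℝ ({z : Fin (n + 1) // z ≠ 0} → ℝ) = n := by
  rw [Module.finrank_pi, card_ne_zero]

noncomputable def Dequiv (p : Fin (n + 1) → Fin (n + 1)) (hp0 : p 0 = 0)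
    (hp : ∀ v, v ≠ 0 → p v < v) (wt : Fin (n + 1) → ℝ) (hwt : ∀ v, v ≠ 0 → 0 < wt v) :
    TPtree n ≃ₗ[ℝ] ({z : Fin (n + 1) // z ≠ 0} → ℝ) :=
  LinearMap.linearEquivOfInjective (Dmap p wt) (Dmap_inj hp0 hp wt hwt)
    (by rw [finrank_TPtree, finrank_target])

lemma Dequiv_apply (p : Fin (n + 1) → Fin (n + 1)) (hp0 : p 0 = 0)
    (hp : ∀ v, v ≠ 0 → p v < v) (wt : Fin (n + 1) → ℝ) (hwt : ∀ v, v ≠ 0 → 0 < wt v)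
    (f : TPtree n) (z : {z : Fin (n + 1) // z ≠ 0}) :
    Dequiv p hp0 hp wt hwt f z = Gval p wt (f : Fin (n + 1) → ℝ) z.val := by
  rw [Dequiv, LinearMap.linearEquivOfInjective_apply]
  rfl

lemma bddAbove_aux {α : Type*} [Finite α] (h : α → ℝ) : BddAbove {r | ∃ a, r = h a} := by
  have : {r | ∃ a, r = h a} = Set.range h := by ext r; simp [eq_comm]
  rw [this]
  exact (Set.finite_range h).bddAbove

lemma bddAbove_aux2 {α : Type*} [Finite α] (h : α → α → ℝ) :
    BddAbove {r | ∃ a b, r = h a b} := by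
  have : {r | ∃ a b, r = h a b} = Set.range (fun ab : α × α => h ab.1 ab.2) := by
    ext r
    constructor
    · rintro ⟨a, b, rfl⟩; exact ⟨(a, b), rfl⟩
    · rintro ⟨⟨a, b⟩, rfl⟩; exact ⟨a, b, rfl⟩
  rw [this]
  exact (Set.finite_range _).bddAbove

end Stmt14Aux

open Stmt14Aux

/-- For every finite weighted tree `T` (rooted tree on `Fin (n+1)` with
parent map `p` and positive edge weights), the Banach–Mazur distance between
`(TP(T), ‖·‖_DP)` and `ℓ_∞^{|E(T)|}` is at most `4`: there is a linear bijection
`D : TP(T) → ℝ^{E(T)}` with `(1/4)‖f‖_DP ≤ ‖D f‖_∞ ≤ ‖f‖_DP` for all `f`. -/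
theorem stmt14 (n : ℕ) (p : Fin (n + 1) → Fin (n + 1)) (hp0 : p 0 = 0)
    (hp : ∀ v, v ≠ 0 → p v < v) (wt : Fin (n + 1) → ℝ)
    (hwt : ∀ v, v ≠ 0 → 0 < wt v) :
    ∃ D : TPtree n ≃ₗ[ℝ] ({z : Fin (n + 1) // z ≠ 0} → ℝ),
      ∀ f : TPtree n,
        (1 / 4) * dpNorm p wt (f : Fin (n + 1) → ℝ) ≤
          sSup {r : ℝ | ∃ z, r = |D f z|} ∧
        sSup {r : ℝ | ∃ z, r = |D f z|} ≤ dpNorm p wt (f : Fin (n + 1) → ℝ) := by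
  refine ⟨Dequiv p hp0 hp wt hwt, fun f => ?_⟩
  have hf : ∑ m, (f : Fin (n + 1) → ℝ) m = 0 := (mem_TPtree _).mp f.2
  set F : Fin (n + 1) → ℝ := (f : Fin (n + 1) → ℝ) with hF
  have hphi : ∀ u v : Fin (n + 1),
      ∑ m, ((treeDist p wt v m - treeDist p wt u m) / 2) * F m
        = Gval p wt F u - Gval p wt F v := fun u v => phi_eq wt F hf u v
  have hD : ∀ z : {z : Fin (n + 1) // z ≠ 0},
      Dequiv p hp0 hp wt hwt f z = Gval p wt F z.val :=
    Dequiv_apply p hp0 hp wt hwt f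
  have hG0 : Gval p wt F 0 = 0 := Gval_zero hp0 wt F
  have hAbdd : BddAbove {r : ℝ | ∃ u v : Fin (n + 1),
      r = |∑ m, ((treeDist p wt v m - treeDist p wt u m) / 2) * F m|} :=
    bddAbove_aux2 (fun u v => |∑ m, ((treeDist p wt v m - treeDist p wt u m) / 2) * F m|)
  have hBbdd : BddAbove {r : ℝ | ∃ z, r = |Dequiv p hp0 hp wt hwt f z|} :=
    bddAbove_aux (fun z => |Dequiv p hp0 hp wt hwt f z|)
  have h00 : |∑ m, ((treeDist p wt 0 m - treeDist p wt 0 m) / 2) * F m| = 0 := by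
    rw [hphi]; simp
  constructor
  · -- (1/4) * dpNorm ≤ sSup B
    have hmain : dpNorm p wt F ≤
        4 * sSup {r : ℝ | ∃ z, r = |Dequiv p hp0 hp wt hwt f z|} := by
      rw [dpNorm]
      refine csSup_le ⟨_, 0, 0, rfl⟩ ?_
      rintro r ⟨u, v, rfl⟩
      rw [hphi]
      rcases isEmpty_or_nonempty {z : Fin (n + 1) // z ≠ 0} with hE | hNE
      · have hzero : ∀ w : Fin (n + 1), Gval p wt F w = 0 := by
          intro w
          by_cases hw : w = 0
          · rw [hw]; exact hG0
          · exact (hE.elim ⟨w, hw⟩)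
        have hBempty : {r : ℝ | ∃ z, r = |Dequiv p hp0 hp wt hwt f z|} = ∅ := by
          ext r
          simp only [Set.mem_setOf_eq, Set.mem_empty_iff_false, iff_false]
          rintro ⟨z, -⟩
          exact hE.elim z
        rw [hzero u, hzero v, sub_zero, abs_zero, hBempty, Real.sSup_empty]
        norm_num
      · have hBnn : 0 ≤ sSup {r : ℝ | ∃ z, r = |Dequiv p hp0 hp wt hwt f z|} :=
          le_trans (abs_nonneg _) (le_csSup hBbdd ⟨Classical.arbitrary _, rfl⟩)
        have hGle : ∀ w : Fin (n + 1),
            |Gval p wt F w| ≤ sSup {r : ℝ | ∃ z, r = |Dequiv p hp0 hp wt hwt f z|} := by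
          intro w
          by_cases hw : w = 0
          · rw [hw, hG0, abs_zero]; exact hBnn
          · refine le_csSup hBbdd ⟨⟨w, hw⟩, ?_⟩
            rw [hD]
        have h1 := hGle u
        have h2 := hGle v
        have h3 : |Gval p wt F u - Gval p wt F v| ≤ |Gval p wt F u| + |Gval p wt F v| :=
          abs_sub _ _
        linarith
    linarith
  · -- sSup B ≤ dpNorm
    rw [dpNorm]
    rcases isEmpty_or_nonempty {z : Fin (n + 1) // z ≠ 0} with hE | hNE
    · have hBempty : {r : ℝ | ∃ z, r = |Dequiv p hp0 hp wt hwt f z|} = ∅ := by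
        ext r
        simp only [Set.mem_setOf_eq, Set.mem_empty_iff_false, iff_false]
        rintro ⟨z, -⟩
        exact hE.elim z
      rw [hBempty, Real.sSup_empty]
      exact le_csSup hAbdd ⟨0, 0, h00.symm⟩
    · refine csSup_le ⟨_, Classical.arbitrary _, rfl⟩ ?_
      rintro r ⟨z, rfl⟩
      have heq : |Dequiv p hp0 hp wt hwt f z|
          = |∑ m, ((treeDist p wt 0 m - treeDist p wt z.val m) / 2) * F m| := by
        rw [hphi, hD, hG0, sub_zero]
      rw [heq]
      exact le_csSup hAbdd ⟨z.val, 0, rfl⟩
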